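/- arXiv:2204.01624 — 5 statements merged into one kernel-verified Lean document; each statement's English description precedes it below -/
import Mathlib

section
/- Let k be an algebraically closed field, w = (q_0, …, q_n) a tuple of positive integer weights, and d = gcd(q_0, …, q_n). Then for all x, y ∈ k^{n+1} \ {0}, there exists λ ∈ k^* with y_i = λ^{q_i} x_i for all i if and only if there exists μ ∈ k^* with y_i = μ^{q_i/d} x_i for all i. Consequently the identity map of k^{n+1} \ {0} induces a bijection WP_w^n(k) → WP_{w'}^n(k), where w' = (q_0/d, …, q_n/d) is a reduced tuple of weights; in particular every weighted projective space over k is (as a set of points) identical to one with reduced weights. (This is the point-level content of the isomorphism WP_w^n(k) ≅ WP_{w'}^n(k) of Proposition: reduction, part (i).) -/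
/-- Over an algebraically closed field, with `d = gcd(q_0, …, q_n)`, two nonzero tuples are
equivalent under the weighted scaling action for the weights `(q_0, …, q_n)` iff they are
equivalent under the weighted scaling action for the reduced weights `(q_0/d, …, q_n/d)`.
Hence the identity map induces a bijection `WP_w^n(k) → WP_{w'}^n(k)` with `w'` reduced. -/
theorem weighted_equiv_iff_reduced_weighted_equiv
    {k : Type*} [Field k] [IsAlgClosed k] {n : ℕ}
    (q : Fin (n + 1) → ℕ) (hq : ∀ i, 0 < q i)
    (d : ℕ) (hd : d = Finset.univ.gcd q)
    (x y : Fin (n + 1) → k) (hx : x ≠ 0) (hy : y ≠ 0) :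
    (∃ lam : k, lam ≠ 0 ∧ ∀ i, y i = lam ^ q i * x i) ↔
    (∃ mu : k, mu ≠ 0 ∧ ∀ i, y i = mu ^ (q i / d) * x i) := by
  have hdvd : ∀ i, d ∣ q i := fun i => hd ▸ Finset.gcd_dvd (Finset.mem_univ i)
  have hdpos : 0 < d := Nat.pos_of_dvd_of_pos (hdvd 0) (hq 0)
  constructor
  · rintro ⟨lam, hlam, h⟩
    refine ⟨lam ^ d, pow_ne_zero _ hlam, fun i => ?_⟩
    rw [← pow_mul, Nat.mul_div_cancel' (hdvd i)]
    exact h i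
  · rintro ⟨mu, hmu, h⟩
    obtain ⟨lam, hlam⟩ := IsAlgClosed.exists_pow_nat_eq mu hdpos
    have hlam0 : lam ≠ 0 := by
      rintro rfl
      simp [zero_pow hdpos.ne'] at hlam
      exact hmu hlam.symm
    refine ⟨lam, hlam0, fun i => ?_⟩
    rw [← Nat.div_mul_cancel (hdvd i), pow_mul', hlam]
    exact h i
end

section
/- Let k be an algebraically closed field and w = (q_0, …, q_n) positive integer weights with gcd(q_0, …, q_n) = 1. Fix an index i and let d_i = gcd(q_0, …, q̂_i, …, q_n) (the gcd of the weights omitting q_i), and let w' = (q_0/d_i, …, q_{i-1}/d_i, q_i, q_{i+1}/d_i, …, q_n/d_i). Then the map k^{n+1} \ {0} → k^{n+1} \ {0} sending (x_0, …, x_n) to (x_0, …, x_{i-1}, x_i^{d_i}, x_{i+1}, …, x_n) induces a well-defined bijection WP_w^n(k) → WP_{w'}^n(k). (This is the point-level content of Proposition: reduction, part (ii).) -/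
/-- The weighted scaling relation on `k^{n+1}`: `y = λ ⋆ x` for some `λ ∈ k^*`, where
`(λ ⋆ x)_i = λ^{q_i} x_i`.  The weighted projective space `WP_q^n(k)` is the quotient of
`k^{n+1} \ {0}` by this relation. -/
def wrel {k : Type*} [Field k] {n : ℕ} (q : Fin (n + 1) → ℕ) (x y : Fin (n + 1) → k) : Prop :=
  ∃ lam : k, lam ≠ 0 ∧ ∀ i, y i = lam ^ q i * x i

/-- Let `k` be algebraically closed, `gcd(q_0, …, q_n) = 1`, `d_i` the gcd of the weights
omitting `q_i`, and `w' = (q_0/d_i, …, q_{i-1}/d_i, q_i, q_{i+1}/d_i, …, q_n/d_i)`.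
Then `x ↦ (x_0, …, x_{i-1}, x_i^{d_i}, x_{i+1}, …, x_n)` maps nonzero tuples to nonzero
tuples, respects the weighted equivalences, and induces a well-defined bijection
`WP_w^n(k) → WP_{w'}^n(k)` (well-definedness, injectivity and surjectivity on classes). -/
theorem weighted_truncation_induces_bijection
    {k : Type*} [Field k] [IsAlgClosed k] {n : ℕ}
    (q : Fin (n + 1) → ℕ) (hq : ∀ i, 0 < q i)
    (hred : Finset.univ.gcd q = 1) (i : Fin (n + 1))
    (d : ℕ) (hd : d = (Finset.univ.erase i).gcd q)
    (q' : Fin (n + 1) → ℕ) (hq' : ∀ j, q' j = if j = i then q i else q j / d)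
    (F : (Fin (n + 1) → k) → (Fin (n + 1) → k))
    (hF : ∀ x, F x = Function.update x i (x i ^ d)) :
    (∀ x : Fin (n + 1) → k, x ≠ 0 → F x ≠ 0) ∧
    (∀ x y : Fin (n + 1) → k, wrel q x y → wrel q' (F x) (F y)) ∧
    (∀ x y : Fin (n + 1) → k, x ≠ 0 → y ≠ 0 → wrel q' (F x) (F y) → wrel q x y) ∧
    (∀ z : Fin (n + 1) → k, z ≠ 0 → ∃ x : Fin (n + 1) → k, x ≠ 0 ∧ wrel q' (F x) z) := by
  have hins : insert i (Finset.univ.erase i) = Finset.univ :=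
    Finset.insert_erase (Finset.mem_univ i)
  have hgcd : Nat.gcd (q i) d = 1 := by
    have h2 := Finset.gcd_insert (b := i) (s := Finset.univ.erase i) (f := q)
    rw [hins, hred] at h2
    rw [hd]
    exact h2.symm
  have hdvd : ∀ j, j ≠ i → d ∣ q j := fun j hj =>
    hd ▸ Finset.gcd_dvd (Finset.mem_erase.mpr ⟨hj, Finset.mem_univ j⟩)
  have hqdm : ∀ j, j ≠ i → q' j * d = q j := fun j hj => by
    rw [hq' j, if_neg hj]; exact Nat.div_mul_cancel (hdvd j hj)
  have hq'i : q' i = q i := by rw [hq' i, if_pos rfl]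
  by_cases hd0 : d = 0
  · -- degenerate case: erase i is empty, so every index equals i, and q i = 1
    have hq1 : q i = 1 := by simpa [hd0] using hgcd
    have hall : ∀ j : Fin (n + 1), j = i := by
      intro j
      by_contra hj
      have := hdvd j hj
      rw [hd0] at this
      exact (hq j).ne' (Nat.eq_zero_of_zero_dvd this)
    refine ⟨?_, ?_, ?_, ?_⟩
    · intro x hx h0
      have : F x i = 0 := by rw [h0]; rfl
      rw [hF, Function.update_self, hd0, pow_zero] at this
      exact one_ne_zero this
    · intro x y _
      refine ⟨1, one_ne_zero, fun j => ?_⟩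
      rw [hall j, hF, hF, Function.update_self, Function.update_self, hd0, pow_zero,
        pow_zero, one_pow, one_mul]
    · intro x y hx hy _
      have hxi : x i ≠ 0 := by
        intro h
        apply hx
        funext j; rw [hall j]; exact h
      have hyi : y i ≠ 0 := by
        intro h
        apply hy
        funext j; rw [hall j]; exact h
      refine ⟨y i / x i, div_ne_zero hyi hxi, fun j => ?_⟩
      rw [hall j, hq1, pow_one, div_mul_cancel₀ _ hxi]
    · intro z hz
      have hzi : z i ≠ 0 := by
        intro h
        apply hz
        funext j; rw [hall j]; exact h
      refine ⟨z, hz, z i, hzi, fun j => ?_⟩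
      rw [hall j, hq'i, hq1, pow_one, hF, Function.update_self, hd0, pow_zero, mul_one]
  · have hdpos : 0 < d := Nat.pos_of_ne_zero hd0
    refine ⟨?_, ?_, ?_, ?_⟩
    · -- F maps nonzero to nonzero
      intro x hx h0
      apply hx
      funext j
      by_cases hj : j = i
      · subst hj
        have : F x j = 0 := by rw [h0]; rfl
        rw [hF, Function.update_self] at this
        exact pow_eq_zero_iff hd0 |>.mp this
      · have : F x j = 0 := by rw [h0]; rfl
        rw [hF, Function.update_of_ne hj] at this
        exact this
    · -- well-definedness
      rintro x y ⟨lam, hlam, h⟩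
      refine ⟨lam ^ d, pow_ne_zero _ hlam, fun j => ?_⟩
      by_cases hj : j = i
      · subst hj
        rw [hF, hF, Function.update_self, Function.update_self, h j, mul_pow, hq'i,
          ← pow_mul, ← pow_mul, Nat.mul_comm]
      · rw [hF, hF, Function.update_of_ne hj, Function.update_of_ne hj, h j,
          ← pow_mul, Nat.mul_comm d (q' j), hqdm j hj]
    · -- injectivity on classes
      rintro x y hx hy ⟨mu, hmu, h⟩
      obtain ⟨lam, hlam⟩ := IsAlgClosed.exists_pow_nat_eq mu hdpos
      have hlam0 : lam ≠ 0 := by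
        intro h0; apply hmu; rw [← hlam, h0, zero_pow hd0]
      have hji : ∀ j, j ≠ i → y j = lam ^ q j * x j := by
        intro j hj
        have := h j
        rw [hF, hF, Function.update_of_ne hj, Function.update_of_ne hj] at this
        rw [this, ← hlam, ← pow_mul, Nat.mul_comm d (q' j), hqdm j hj]
      have hii : y i ^ d = (lam ^ q i * x i) ^ d := by
        have := h i
        rw [hF, hF, Function.update_self, Function.update_self] at this
        rw [this, ← hlam, hq'i, mul_pow, ← pow_mul, ← pow_mul, Nat.mul_comm]
      by_cases hxi : x i = 0
      · refine ⟨lam, hlam0, fun j => ?_⟩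
        by_cases hj : j = i
        · subst hj
          rw [hxi, mul_zero]
          rw [hxi, mul_zero, zero_pow hd0, pow_eq_zero_iff hd0] at hii
          exact hii
        · exact hji j hj
      · -- adjust lam by a d-th root of unity
        set c : k := lam ^ q i * x i with hc
        have hc0 : c ≠ 0 := mul_ne_zero (pow_ne_zero _ hlam0) hxi
        have hyi : y i ≠ 0 := by
          intro h0
          rw [h0, zero_pow hd0] at hii
          exact pow_ne_zero d hc0 hii.symm
        set z : k := y i / c with hz
        have hz0 : z ≠ 0 := div_ne_zero hyi hc0
        have hzd : z ^ d = 1 := by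
          rw [hz, div_pow, ← hii, div_self (pow_ne_zero d hyi)]
        obtain ⟨a, b, hbez⟩ : ∃ a b : ℤ, (q i : ℤ) * a + (d : ℤ) * b = 1 :=
          ⟨Nat.gcdA (q i) d, Nat.gcdB (q i) d, by
            have h2 := Nat.gcd_eq_gcd_ab (q i) d
            rw [hgcd] at h2
            push_cast at h2 ⊢
            linarith⟩
        have hzpow : ∀ m : ℕ, d ∣ m → z ^ ((m : ℤ) * a) = 1 := by
          intro m hm
          obtain ⟨c', rfl⟩ := hm
          push_cast [mul_assoc]
          rw [zpow_mul, zpow_natCast, hzd, one_zpow]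
        have hzqi : z ^ ((q i : ℤ) * a) = z := by
          have : (q i : ℤ) * a = 1 - (d : ℤ) * b := by linarith
          rw [this, zpow_sub₀ hz0, zpow_one, zpow_mul, zpow_natCast, hzd, one_zpow, div_one]
        refine ⟨z ^ a * lam, mul_ne_zero (zpow_ne_zero a hz0) hlam0, fun j => ?_⟩
        have key : ∀ m : ℕ, (z ^ a * lam) ^ m = z ^ ((m : ℤ) * a) * lam ^ m := by
          intro m
          rw [mul_pow, ← zpow_natCast (z ^ a), ← zpow_mul, mul_comm (a) (m : ℤ)]
        by_cases hj : j = i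
        · subst hj
          rw [key, hzqi, mul_assoc, ← hc, hz, div_mul_cancel₀ _ hc0]
        · rw [key, hzpow (q j) (hdvd j hj), one_mul]
          exact hji j hj
    · -- surjectivity on classes
      intro z hz
      obtain ⟨r, hr⟩ := IsAlgClosed.exists_pow_nat_eq (z i) hdpos
      refine ⟨Function.update z i r, ?_, 1, one_ne_zero, fun j => ?_⟩
      · intro h0
        apply hz
        funext j
        by_cases hj : j = i
        · subst hj
          have : Function.update z j r j = 0 := by rw [h0]; rfl
          rw [Function.update_self] at this
          rw [← hr, this, zero_pow hd0]; rfl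
        · have : Function.update z i r j = 0 := by rw [h0]; rfl
          rw [Function.update_of_ne hj] at this
          rw [this]; rfl
      · rw [one_pow, one_mul, hF]
        by_cases hj : j = i
        · subst hj
          rw [Function.update_self, Function.update_self, hr]
        · rw [Function.update_of_ne hj, Function.update_of_ne hj]
end

section
/- Let k be an algebraically closed field and w = (q_0, …, q_n) positive integer weights with gcd(q_0, …, q_n) = 1. Let m = lcm(q_0, …, q_n) and suppose the integers m/q_0, …, m/q_n are pairwise coprime. Then the Veronese map φ_m sending [x_0 : ⋯ : x_n] ∈ WP_w^n(k) to [x_0^{m/q_0} : ⋯ : x_n^{m/q_n}] ∈ P^n(k) is a well-defined bijection from the weighted projective space WP_w^n(k) onto the ordinary projective space P^n(k). (This is the point-level content of Proposition: reduction, part (iv).) -/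
/-- If `d ^ n = 1` then powers of `d` only depend on the exponent mod `n`. -/
lemma pow_mod_of_pow_eq_one {M : Type*} [Monoid M] {d : M} {n : ℕ} (h : d ^ n = 1) (a : ℕ) :
    d ^ a = d ^ (a % n) := by
  conv_lhs => rw [← Nat.div_add_mod a n]
  rw [pow_add, pow_mul, h, one_pow, one_mul]

/-- A natural number coprime to `n` has a multiplicative inverse mod `n`. -/
lemma exists_modinv (a n : ℕ) (h : Nat.Coprime a n) : ∃ b, a * b ≡ 1 [MOD n] := by
  rcases lt_or_ge 1 n with hn | hn
  · obtain ⟨b, -, hb⟩ := Nat.exists_mul_mod_eq_one_of_coprime h hn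
    exact ⟨b, by unfold Nat.ModEq; rw [hb, Nat.mod_eq_of_lt hn]⟩
  · interval_cases n
    · rw [Nat.coprime_zero_right] at h
      exact ⟨1, by simp [h]⟩
    · exact ⟨1, Nat.modEq_one⟩

/-- Let `k` be algebraically closed, `gcd(q_0, …, q_n) = 1`, `m = lcm(q_0, …, q_n)`, and
suppose `m/q_0, …, m/q_n` are pairwise coprime.  Then the Veronese map
`[x_0 : ⋯ : x_n] ↦ [x_0^{m/q_0} : ⋯ : x_n^{m/q_n}]` is a well-defined bijection from
`WP_w^n(k)` onto `P^n(k)`: it maps nonzero tuples to nonzero tuples, respects the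
equivalences, and is injective and surjective on equivalence classes. -/
theorem veronese_induces_bijection
    {k : Type*} [Field k] [IsAlgClosed k] {n : ℕ}
    (q : Fin (n + 1) → ℕ) (hq : ∀ i, 0 < q i)
    (hred : Finset.univ.gcd q = 1)
    (m : ℕ) (hm : m = Finset.univ.lcm q)
    (hcop : ∀ i j : Fin (n + 1), i ≠ j → Nat.Coprime (m / q i) (m / q j))
    (F : (Fin (n + 1) → k) → (Fin (n + 1) → k))
    (hF : ∀ x j, F x j = x j ^ (m / q j)) :
    (∀ x : Fin (n + 1) → k, x ≠ 0 → F x ≠ 0) ∧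
    (∀ x y : Fin (n + 1) → k, wrel q x y → wrel (fun _ => 1) (F x) (F y)) ∧
    (∀ x y : Fin (n + 1) → k, x ≠ 0 → y ≠ 0 →
      wrel (fun _ => 1) (F x) (F y) → wrel q x y) ∧
    (∀ z : Fin (n + 1) → k, z ≠ 0 →
      ∃ x : Fin (n + 1) → k, x ≠ 0 ∧ wrel (fun _ => 1) (F x) z) := by
  classical
  have hqm : ∀ i, q i ∣ m := fun i => hm ▸ Finset.dvd_lcm (Finset.mem_univ i)
  have hm0 : 0 < m := by
    rw [Nat.pos_iff_ne_zero]
    intro h0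
    rw [hm, Finset.lcm_eq_zero_iff] at h0
    obtain ⟨i, -, hi⟩ := h0
    exact (hq i).ne' hi
  have hmi0 : ∀ i, 0 < m / q i := fun i => Nat.div_pos (Nat.le_of_dvd hm0 (hqm i)) (hq i)
  have hmul : ∀ i, q i * (m / q i) = m := fun i => Nat.mul_div_cancel' (hqm i)
  have L1 : ∀ i j : Fin (n + 1), i ≠ j → (m / q j) ∣ q i := by
    intro i j hij
    have h1 : (m / q j) ∣ q i * (m / q i) := by
      rw [hmul i]; exact Nat.div_dvd_of_dvd (hqm j)
    exact (hcop j i (Ne.symm hij)).dvd_of_dvd_mul_right h1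
  have L2 : ∀ j, Nat.Coprime (q j) (m / q j) := by
    intro j
    have hdvd : Nat.gcd (q j) (m / q j) ∣ Finset.univ.gcd q := by
      apply Finset.dvd_gcd
      intro i _
      by_cases hij : i = j
      · subst hij; exact Nat.gcd_dvd_left _ _
      · exact dvd_trans (Nat.gcd_dvd_right _ _) (L1 i j hij)
    rw [hred] at hdvd
    exact Nat.dvd_one.mp hdvd
  refine ⟨?_, ?_, ?_, ?_⟩
  · -- well-defined: nonzero goes to nonzero
    intro x hx h0
    obtain ⟨i, hi⟩ : ∃ i, x i ≠ 0 := by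
      by_contra hc; push_neg at hc; exact hx (funext hc)
    have hFi : F x i = 0 := by rw [h0]; rfl
    rw [hF] at hFi
    exact hi (pow_eq_zero_iff (hmi0 i).ne' |>.mp hFi)
  · -- respects the relations
    rintro x y ⟨lam, hl, hxy⟩
    refine ⟨lam ^ m, pow_ne_zero _ hl, fun i => ?_⟩
    simp only [hF, hxy i, pow_one, mul_pow, ← pow_mul, hmul i]
  · -- injective on classes
    rintro x y hx hy ⟨μ, hμ, hFxy⟩
    have key : ∀ i, y i ^ (m / q i) = μ * x i ^ (m / q i) := by
      intro i
      have := hFxy i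
      rwa [hF, hF, pow_one] at this
    obtain ⟨ν, hν⟩ := IsAlgClosed.exists_pow_nat_eq μ hm0
    have hν0 : ν ≠ 0 := by
      rintro rfl; rw [zero_pow hm0.ne'] at hν; exact hμ hν.symm
    choose e he using fun j => exists_modinv (q j) (m / q j) (L2 j)
    set d : Fin (n + 1) → k := fun j => y j / x j / ν ^ q j with hd
    have hy0 : ∀ j, x j ≠ 0 → y j ≠ 0 := by
      intro j hj hyj
      have hk := key j
      rw [hyj, zero_pow (hmi0 j).ne'] at hk
      exact (mul_ne_zero hμ (pow_ne_zero _ hj)) hk.symm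
    have hyx0 : ∀ j, x j = 0 → y j = 0 := by
      intro j hj
      have hk := key j
      rw [hj, zero_pow (hmi0 j).ne', mul_zero] at hk
      exact pow_eq_zero_iff (hmi0 j).ne' |>.mp hk
    have hd1 : ∀ j, x j ≠ 0 → d j ^ (m / q j) = 1 := by
      intro j hj
      have hx' : x j ^ (m / q j) ≠ 0 := pow_ne_zero _ hj
      rw [hd]
      simp only
      rw [div_pow, div_pow, key j, ← pow_mul, hmul j, hν,
        mul_div_assoc, div_self hx', mul_one, div_self hμ]
    have hdnz : ∀ j, x j ≠ 0 → d j ≠ 0 := by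
      intro j hj
      exact div_ne_zero (div_ne_zero (hy0 j hj) hj) (pow_ne_zero _ hν0)
    set D : Fin (n + 1) → k := fun j => if x j = 0 then 1 else d j ^ e j with hD
    have hD0 : ∀ j, D j ≠ 0 := by
      intro j
      rw [hD]
      simp only
      split
      · exact one_ne_zero
      · next h => exact pow_ne_zero _ (hdnz j h)
    refine ⟨ν * ∏ j, D j, mul_ne_zero hν0 (Finset.prod_ne_zero_iff.mpr fun j _ => hD0 j),
      fun i => ?_⟩
    by_cases hxi : x i = 0
    · rw [hxi, mul_zero, hyx0 i hxi]
    · have hprod : (∏ j, D j) ^ q i = d i := by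
        rw [← Finset.prod_pow, Finset.prod_eq_single i]
        · rw [hD]
          simp only [if_neg hxi]
          have hei : (q i * e i) % (m / q i) = 1 % (m / q i) := he i
          rw [← pow_mul, mul_comm (e i), pow_mod_of_pow_eq_one (hd1 i hxi), hei,
            ← pow_mod_of_pow_eq_one (hd1 i hxi), pow_one]
        · intro j _ hji
          rw [hD]
          simp only
          split
          · exact one_pow _
          · next hxj =>
            rw [← pow_mul, pow_mod_of_pow_eq_one (hd1 j hxj)]
            have hz : (e j * q i) % (m / q j) = 0 :=
              Nat.mod_eq_zero_of_dvd ((L1 i j (Ne.symm hji)).mul_left (e j))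
            rw [hz, pow_zero]
        · intro h; exact absurd (Finset.mem_univ i) h
      rw [mul_pow, hprod, hd]
      simp only
      field_simp
  · -- surjective on classes
    intro z hz
    choose x hx using fun j => IsAlgClosed.exists_pow_nat_eq (z j) (hmi0 j)
    refine ⟨x, ?_, 1, one_ne_zero, fun i => ?_⟩
    · intro h0
      apply hz
      funext j
      have hj : x j = 0 := congrFun h0 j
      have : z j = 0 := by rw [← hx j, hj, zero_pow (hmi0 j).ne']
      simpa using this
    · rw [hF, hx i, pow_one, one_mul]
end

section
/- Let q_0, …, q_n be positive integers with gcd(q_0, …, q_n) = 1. For each index i set d_i = gcd(q_0, …, q̂_i, …, q_n) (the gcd of the weights omitting q_i), a_i = lcm(d_0, …, d̂_i, …, d_n) (the lcm of the d_j omitting d_i), and a = lcm(d_0, …, d_n). Then: (1) for all i ≠ j, gcd(d_i, d_j) = 1 and d_j divides q_i; (2) for every i, a_i divides q_i, gcd(a_i, d_i) = 1, and a_i · d_i = a. -/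
lemma coprime_finset_lcm {α : Type*} {k : ℕ} (s : Finset α) (f : α → ℕ)
    (h : ∀ j ∈ s, Nat.Coprime k (f j)) : Nat.Coprime k (s.lcm f) := by
  classical
  induction s using Finset.induction_on with
  | empty => simp [Nat.coprime_one_right]
  | @insert x t hx ih =>
    rw [Finset.lcm_insert, lcm_eq_nat_lcm]
    have h1 : Nat.Coprime k (f x) := h x (Finset.mem_insert_self _ _)
    have h2 : Nat.Coprime k (t.lcm f) := ih fun j hj => h j (Finset.mem_insert_of_mem hj)
    exact Nat.Coprime.coprime_dvd_right
      (Nat.lcm_dvd (dvd_mul_right _ _) (dvd_mul_left _ _)) (h1.mul_right h2)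

/-- Let `q_0, …, q_n` be positive integers with `gcd(q_0, …, q_n) = 1`.  With
`d_i = gcd(q_0, …, q̂_i, …, q_n)`, `a_i = lcm(d_0, …, d̂_i, …, d_n)` and
`a = lcm(d_0, …, d_n)`, one has: (1) for `i ≠ j`, `gcd(d_i, d_j) = 1` and `d_j ∣ q_i`;
(2) for every `i`, `a_i ∣ q_i`, `gcd(a_i, d_i) = 1` and `a_i · d_i = a`. -/
theorem weights_gcd_lcm_relations {n : ℕ} (q : Fin (n + 1) → ℕ) (hq : ∀ i, 0 < q i)
    (hred : Finset.univ.gcd q = 1)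
    (d : Fin (n + 1) → ℕ) (hd : ∀ i, d i = (Finset.univ.erase i).gcd q)
    (a' : Fin (n + 1) → ℕ) (ha' : ∀ i, a' i = (Finset.univ.erase i).lcm d)
    (a : ℕ) (ha : a = Finset.univ.lcm d) :
    (∀ i j : Fin (n + 1), i ≠ j → Nat.Coprime (d i) (d j) ∧ d j ∣ q i) ∧
    (∀ i : Fin (n + 1), a' i ∣ q i ∧ Nat.Coprime (a' i) (d i) ∧ a' i * d i = a) := by
  classical
  have hdvd : ∀ i j : Fin (n + 1), i ≠ j → d j ∣ q i := by
    intro i j hij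
    rw [hd]
    exact Finset.gcd_dvd (Finset.mem_erase.mpr ⟨hij, Finset.mem_univ i⟩)
  have hcop : ∀ i j : Fin (n + 1), i ≠ j → Nat.Coprime (d i) (d j) := by
    intro i j hij
    have : Nat.gcd (d i) (d j) ∣ Finset.univ.gcd q := by
      apply Finset.dvd_gcd
      intro k _
      by_cases hk : k = i
      · subst hk; exact (Nat.gcd_dvd_right _ _).trans (hdvd k j (by simpa using hij))
      · exact (Nat.gcd_dvd_left _ _).trans (hdvd k i (Ne.symm (fun h => hk h.symm)))
    rw [hred] at this
    exact Nat.eq_one_of_dvd_one this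
  refine ⟨fun i j hij => ⟨hcop i j hij, hdvd i j hij⟩, fun i => ?_⟩
  have hai : a' i ∣ q i := by
    rw [ha']
    apply Finset.lcm_dvd
    intro j hj
    exact hdvd i j (Ne.symm (Finset.mem_erase.mp hj).1)
  have hcopa : Nat.Coprime (a' i) (d i) := by
    rw [ha']
    exact Nat.Coprime.symm <| coprime_finset_lcm _ _ fun j hj =>
      Nat.Coprime.symm (hcop j i (Finset.mem_erase.mp hj).1)
  refine ⟨hai, hcopa, ?_⟩
  have : a = Nat.lcm (d i) (a' i) := by
    rw [ha, ha', ← lcm_eq_nat_lcm, ← Finset.lcm_insert, Finset.insert_erase (Finset.mem_univ i)]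
  rw [this, Nat.lcm_comm, hcopa.lcm_eq_mul]
end

section
/- Let k be a field, w = (q_0, …, q_n) positive integer weights, and fix an index i. Define the i-th chart map of the weighted blow-up φ^i : k^{n+1} → k^{n+1} by (φ^i(x))_i = x_i^{q_i} and (φ^i(x))_j = x_i^{q_j} x_j for j ≠ i. Then for all x, y ∈ k^{n+1} with x_i ≠ 0: φ^i(x) = φ^i(y) if and only if there exists ξ ∈ k with ξ^{q_i} = 1 such that y_i = ξ^{-1} x_i and y_j = ξ^{q_j} x_j for all j ≠ i. -/
/-- The `i`-th chart map of the weighted blow-up, `φ^i(x)_i = x_i^{q_i}` and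
`φ^i(x)_j = x_i^{q_j} x_j` for `j ≠ i`, identifies exactly the tuples differing by the
`μ_{q_i}`-action: for `x_i ≠ 0`, `φ^i(x) = φ^i(y)` iff there is `ξ` with `ξ^{q_i} = 1`,
`y_i = ξ⁻¹ x_i` and `y_j = ξ^{q_j} x_j` for all `j ≠ i`. -/
theorem blowup_chart_fibers {k : Type*} [Field k] {n : ℕ}
    (q : Fin (n + 1) → ℕ) (hq : ∀ i, 0 < q i) (i : Fin (n + 1))
    (phi : (Fin (n + 1) → k) → (Fin (n + 1) → k))
    (hphi : ∀ x j, phi x j = if j = i then x i ^ q i else x i ^ q j * x j)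
    (x y : Fin (n + 1) → k) (hx : x i ≠ 0) :
    phi x = phi y ↔
      ∃ xi : k, xi ^ q i = 1 ∧ y i = xi⁻¹ * x i ∧ ∀ j, j ≠ i → y j = xi ^ q j * x j := by
  constructor
  · intro h
    have hi := congrFun h i
    rw [hphi, hphi, if_pos rfl, if_pos rfl] at hi
    have hy : y i ≠ 0 := by
      intro h0
      rw [h0, zero_pow (hq i).ne'] at hi
      exact hx (pow_eq_zero_iff (hq i).ne' |>.mp hi)
    refine ⟨x i / y i, ?_, ?_, ?_⟩
    · rw [div_pow, hi, div_self (pow_ne_zero _ hy)]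
    · field_simp
    · intro j hj
      have hjj := congrFun h j
      rw [hphi, hphi, if_neg hj, if_neg hj] at hjj
      field_simp
      have h1 : y i ^ q j * (y i)⁻¹ ^ q j = 1 := by rw [← mul_pow, mul_inv_cancel₀ hy, one_pow]
      linear_combination (-(y i)⁻¹ ^ q j) * hjj - y j * h1
  · rintro ⟨xi, hxi, hyi, hyj⟩
    have hxi0 : xi ≠ 0 := fun h0 => by simp [h0, zero_pow (hq i).ne'] at hxi
    funext j
    rw [hphi, hphi]
    by_cases hji : j = i
    · rw [if_pos hji, if_pos hji, hyi, mul_pow, inv_pow, hxi, inv_one, one_mul]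
    · rw [if_neg hji, if_neg hji, hyi, hyj j hji, mul_pow, inv_pow]
      field_simp
end
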